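/- arXiv:2101.02944 — 6 statements merged into one kernel-verified Lean document; each statement's English description precedes it below -/
import Mathlib

section
/- If L : E → ℝ is scale invariant, i.e. L(T_a(θ)) = L(θ) for every θ ∈ E and every a : Fin N₁ → ℝ with all aᵢ > 0, then the δ-L^p BN-sharpness is scale invariant: for every θ ∈ E, every δ > 0, every p > 0, and every a with all aᵢ > 0, one has ‖L‖_p^{δ,θ} = ‖L‖_p^{δ,T_a(θ)}. -/
open MeasureTheory Filter Set

noncomputable section

/-- `E = E₁ × F` with the product (ℓ²) inner product, where
`E₁ = Π i : Fin N₁, EuclideanSpace ℝ (Fin (n i))`. -/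
abbrev BNSpace {N₁ : ℕ} (n : Fin N₁ → ℕ) (F : Type*) [NormedAddCommGroup F] :=
  WithLp 2 ((PiLp 2 fun i => EuclideanSpace ℝ (Fin (n i))) × F)

variable {N₁ : ℕ} {n : Fin N₁ → ℕ} {F : Type*} [NormedAddCommGroup F]
  [InnerProductSpace ℝ F] [FiniteDimensional ℝ F]

/-- `φ(θ)`: the set of `v = (v₁, …, v_{N₁}, v*)` with `‖vᵢ‖ = ‖θᵢ‖` for all `i`
and `‖v*‖ = 1`. -/
def phi (θ : BNSpace n F) : Set (BNSpace n F) :=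
  {v | (∀ i, ‖v.ofLp.1 i‖ = ‖θ.ofLp.1 i‖) ∧ ‖v.ofLp.2‖ = 1}

/-- The δ-Lᵖ BN-sharpness
`‖L‖_p^{δ,θ} = sup_{v ∈ φ(θ)} δ^{-1/p} (∫_{-δ}^{δ} |(L(θ + t·v) − L(θ))/δ|^p dt)^{1/p}`. -/
def bnSharpness (L : BNSpace n F → ℝ) (p δ : ℝ) (θ : BNSpace n F) : ℝ :=
  sSup ((fun v => δ ^ (-(1 / p)) *
    (∫ t in (-δ)..δ, |(L (θ + t • v) - L θ) / δ| ^ p) ^ (1 / p)) '' phi θ)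

/-- The scale transformation `T_a(θ) = (a₁·θ₁, …, a_{N₁}·θ_{N₁}, θ*)`. -/
def Tscale (a : Fin N₁ → ℝ) (θ : BNSpace n F) : BNSpace n F :=
  WithLp.toLp 2 (WithLp.toLp 2 (fun i => a i • θ.ofLp.1 i), θ.ofLp.2)

lemma Tscale_add_smul (a : Fin N₁ → ℝ) (θ v : BNSpace n F) (t : ℝ) :
    Tscale a (θ + t • v) = Tscale a θ + t • Tscale a v := by
  unfold Tscale
  apply WithLp.ofLp_injective
  refine Prod.ext ?_ rfl
  apply WithLp.ofLp_injective
  funext i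
  show a i • (θ.ofLp.1 i + t • v.ofLp.1 i) = a i • θ.ofLp.1 i + t • a i • v.ofLp.1 i
  rw [smul_add, smul_comm]

lemma Tscale_Tscale_inv (a : Fin N₁ → ℝ) (ha : ∀ i, 0 < a i) (v : BNSpace n F) :
    Tscale a (Tscale (fun i => (a i)⁻¹) v) = v := by
  unfold Tscale
  apply WithLp.ofLp_injective
  refine Prod.ext ?_ rfl
  apply WithLp.ofLp_injective
  funext i
  show a i • (a i)⁻¹ • v.ofLp.1 i = v.ofLp.1 i
  rw [smul_smul, mul_inv_cancel₀ (ha i).ne', one_smul]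

/-- If `L` is scale invariant, then the δ-Lᵖ BN-sharpness is scale invariant. -/
theorem bnSharpness_scale_invariant (L : BNSpace n F → ℝ) (hL : Continuous L)
    (hinv : ∀ (θ : BNSpace n F) (a : Fin N₁ → ℝ), (∀ i, 0 < a i) → L (Tscale a θ) = L θ) :
    ∀ (θ : BNSpace n F) (δ p : ℝ), 0 < δ → 0 < p →
      ∀ a : Fin N₁ → ℝ, (∀ i, 0 < a i) →
        bnSharpness L p δ θ = bnSharpness L p δ (Tscale a θ) := by
  intro θ δ p hδ hp a ha
  unfold bnSharpness
  congr 1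
  have key : ∀ v : BNSpace n F,
      (∫ t in (-δ)..δ, |(L (Tscale a θ + t • Tscale a v) - L (Tscale a θ)) / δ| ^ p)
        = ∫ t in (-δ)..δ, |(L (θ + t • v) - L θ) / δ| ^ p := by
    intro v
    apply intervalIntegral.integral_congr
    intro t _
    simp only []
    rw [← Tscale_add_smul, hinv _ a ha, hinv θ a ha]
  apply Set.Subset.antisymm
  · rintro x ⟨v, hv, rfl⟩
    refine ⟨Tscale a v, ⟨fun i => ?_, hv.2⟩, ?_⟩
    · show ‖a i • v.ofLp.1 i‖ = ‖a i • θ.ofLp.1 i‖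
      rw [norm_smul, norm_smul, hv.1 i]
    · dsimp only
      rw [key v]
  · rintro x ⟨v, hv, rfl⟩
    refine ⟨Tscale (fun i => (a i)⁻¹) v, ⟨fun i => ?_, hv.2⟩, ?_⟩
    · show ‖(a i)⁻¹ • v.ofLp.1 i‖ = ‖θ.ofLp.1 i‖
      rw [norm_smul, hv.1 i]
      show |(a i)⁻¹| * ‖a i • θ.ofLp.1 i‖ = ‖θ.ofLp.1 i‖
      rw [norm_smul, Real.norm_eq_abs, ← mul_assoc, ← abs_mul,
        inv_mul_cancel₀ (ha i).ne', abs_one, one_mul]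
    · dsimp only
      rw [← key (Tscale (fun i => (a i)⁻¹) v), Tscale_Tscale_inv a ha]
end
end

section
/- Suppose L : E → ℝ is continuous and scale invariant, i.e. L(T_a(θ)) = L(θ) for every θ ∈ E and every a : Fin N₁ → ℝ with all aᵢ > 0. Then for every θ ∈ E, every v ∈ φ(θ), every δ > 0, every p > 0 and every such a, the directional Lᵖ integrals agree: ∫_{-δ}^{δ} |(L(θ + t·v) − L(θ))/δ|^p dt = ∫_{-δ}^{δ} |(L(T_a(θ) + t·T_a(v)) − L(T_a(θ)))/δ|^p dt. -/
open MeasureTheory Filter Set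

noncomputable section

variable {N₁ : ℕ} {n : Fin N₁ → ℕ} {F : Type*} [NormedAddCommGroup F]
  [InnerProductSpace ℝ F] [FiniteDimensional ℝ F]

/-- If `L` is continuous and scale invariant, the directional Lᵖ integrals in the
direction `v` at `θ`, and in the direction `T_a(v)` at `T_a(θ)`, agree. -/
theorem directional_integral_scale_invariant (L : BNSpace n F → ℝ) (hL : Continuous L)
    (hinv : ∀ (θ : BNSpace n F) (a : Fin N₁ → ℝ), (∀ i, 0 < a i) → L (Tscale a θ) = L θ) :
    ∀ (θ : BNSpace n F), ∀ v ∈ phi θ, ∀ δ p : ℝ, 0 < δ → 0 < p →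
      ∀ a : Fin N₁ → ℝ, (∀ i, 0 < a i) →
        ∫ t in (-δ)..δ, |(L (θ + t • v) - L θ) / δ| ^ p =
          ∫ t in (-δ)..δ, |(L (Tscale a θ + t • Tscale a v) - L (Tscale a θ)) / δ| ^ p := by
  intro θ v hv δ p hδ hp a ha
  have key : ∀ t : ℝ, Tscale a θ + t • Tscale a v = Tscale a (θ + t • v) := by
    intro t
    apply WithLp.ofLp_injective
    apply Prod.ext
    · apply WithLp.ofLp_injective
      funext i
      show a i • θ.ofLp.1 i + t • (a i • v.ofLp.1 i) = a i • (θ.ofLp.1 i + t • v.ofLp.1 i)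
      rw [smul_add, smul_comm]
    · show θ.ofLp.2 + t • v.ofLp.2 = θ.ofLp.2 + t • v.ofLp.2
      rfl
  refine intervalIntegral.integral_congr fun t _ => ?_
  rw [key, hinv _ a ha, hinv _ a ha]
end
end

section
/- δ-sharpness is not scale invariant for scale-invariant functions: there exist a dimension n ≥ 2, a nonnegative function L : EuclideanSpace ℝ n → ℝ that is continuous on {x : x ≠ 0} and satisfies L(c • x) = L(x) for every c > 0 and every x ≠ 0, together with a point θ ≠ 0, a scalar c > 0 and a radius δ > 0, such that sup_{θ' ∈ closedBall(θ, δ)} (L(θ') − L(θ)) ≠ sup_{θ' ∈ closedBall(c • θ, δ)} (L(θ') − L(c • θ)). -/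
open MeasureTheory Filter Set

noncomputable section

lemma coord_abs_le_norm (y : EuclideanSpace ℝ (Fin 2)) : |y 0| ≤ ‖y‖ := by
  have h := abs_real_inner_le_norm (EuclideanSpace.single (0 : Fin 2) (1:ℝ)) y
  rw [EuclideanSpace.inner_single_left, EuclideanSpace.norm_single] at h
  simpa using h

/-- δ-sharpness is not scale invariant for scale-invariant functions: there exist a
dimension `n ≥ 2`, a nonnegative function `L` on `EuclideanSpace ℝ (Fin n)` that is
continuous away from `0` and scale invariant (`L (c • x) = L x` for `c > 0`, `x ≠ 0`),
a point `θ ≠ 0`, a scalar `c > 0` and a radius `δ > 0` such that the δ-sharpness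
`sup_{θ' ∈ closedBall(θ, δ)} (L θ' − L θ)` differs between `θ` and `c • θ`. -/
theorem delta_sharpness_not_scale_invariant :
    ∃ (n : ℕ), 2 ≤ n ∧ ∃ (L : EuclideanSpace ℝ (Fin n) → ℝ),
      (∀ x, 0 ≤ L x) ∧
      ContinuousOn L {x : EuclideanSpace ℝ (Fin n) | x ≠ 0} ∧
      (∀ c : ℝ, 0 < c → ∀ x : EuclideanSpace ℝ (Fin n), x ≠ 0 → L (c • x) = L x) ∧
      ∃ (θ : EuclideanSpace ℝ (Fin n)), θ ≠ 0 ∧ ∃ (c : ℝ), 0 < c ∧ ∃ (δ : ℝ), 0 < δ ∧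
        sSup ((fun θ' => L θ' - L θ) '' Metric.closedBall θ δ) ≠
          sSup ((fun θ' => L θ' - L (c • θ)) '' Metric.closedBall (c • θ) δ) := by
  refine ⟨2, le_refl 2, fun x => max 0 (1/2 - x 0 / ‖x‖), fun x => le_max_left _ _, ?_, ?_, ?_⟩
  · -- continuity away from 0
    have hdiv : ContinuousOn (fun x : EuclideanSpace ℝ (Fin 2) => 1/2 - x 0 / ‖x‖)
        {x : EuclideanSpace ℝ (Fin 2) | x ≠ 0} := by
      apply continuousOn_const.sub
      apply ContinuousOn.div
      · exact (EuclideanSpace.proj (0 : Fin 2) : EuclideanSpace ℝ (Fin 2) →L[ℝ] ℝ).continuous.continuousOn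
      · exact continuous_norm.continuousOn
      · intro x hx
        simpa [norm_ne_zero_iff] using hx
    exact (continuous_const.max continuous_id).comp_continuousOn hdiv
  · -- scale invariance
    intro c hc x hx
    show max 0 (1/2 - (c • x : EuclideanSpace ℝ (Fin 2)) 0 / ‖c • x‖) =
      max 0 (1/2 - x 0 / ‖x‖)
    have hcx : ((c • x : EuclideanSpace ℝ (Fin 2)) 0) = c * x 0 := rfl
    rw [hcx, norm_smul, Real.norm_eq_abs, abs_of_pos hc,
      mul_div_mul_left _ _ (ne_of_gt hc)]
  · -- the counterexample point
    set θ : EuclideanSpace ℝ (Fin 2) := EuclideanSpace.single 0 1 with hθdef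
    have hθn : ‖θ‖ = 1 := by simp [hθdef, EuclideanSpace.norm_single]
    have hθ0 : θ 0 = 1 := by simp [hθdef, EuclideanSpace.single_apply]
    have hθne : θ ≠ 0 := by
      intro h; rw [h] at hθn; simp at hθn
    refine ⟨θ, hθne, 10, by norm_num, 1, one_pos, ?_⟩
    have hLθ : max 0 (1/2 - θ 0 / ‖θ‖) = 0 := by
      rw [hθ0, hθn]; norm_num
    have hL10θ : max 0 (1/2 - ((10:ℝ) • θ) 0 / ‖(10:ℝ) • θ‖) = 0 := by
      have h1 : ((10:ℝ) • θ) 0 = 10 := by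
        show (10:ℝ) * θ 0 = 10
        rw [hθ0]; ring
      have h2 : ‖(10:ℝ) • θ‖ = 10 := by
        rw [norm_smul, hθn]; norm_num
      rw [h1, h2]; norm_num
    -- L is zero on the far ball
    have hzero : ∀ x ∈ Metric.closedBall ((10:ℝ) • θ) 1,
        max 0 (1/2 - x 0 / ‖x‖) = 0 := by
      intro x hx
      rw [Metric.mem_closedBall, dist_eq_norm] at hx
      have hx0 : |x 0 - 10| ≤ 1 := by
        have := coord_abs_le_norm (x - (10:ℝ) • θ)
        have he : (x - (10:ℝ) • θ) 0 = x 0 - 10 := by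
          show x 0 - (10:ℝ) * θ 0 = x 0 - 10
          rw [hθ0]; ring
        rw [he] at this
        exact this.trans hx
      have hx0' : (9:ℝ) ≤ x 0 := by
        have := abs_le.mp hx0
        linarith [this.1]
      have hxn : ‖x‖ ≤ 11 := by
        have h1 : ‖x‖ ≤ ‖x - (10:ℝ) • θ‖ + ‖(10:ℝ) • θ‖ := by
          simpa using norm_add_le (x - (10:ℝ) • θ) ((10:ℝ) • θ)
        have h2 : ‖(10:ℝ) • θ‖ = 10 := by rw [norm_smul, hθn]; norm_num
        linarith
      have hxnpos : (0:ℝ) < ‖x‖ := by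
        have := coord_abs_le_norm x
        have : (9:ℝ) ≤ ‖x‖ := le_trans (le_trans hx0' (le_abs_self _)) this
        linarith
      have : (1:ℝ)/2 ≤ x 0 / ‖x‖ := by
        rw [le_div_iff₀ hxnpos]
        linarith
      exact max_eq_left (by linarith)
    -- RHS sup is 0
    have hRHS : sSup ((fun θ' => max 0 (1/2 - θ' 0 / ‖θ'‖) -
        max 0 (1/2 - ((10:ℝ) • θ) 0 / ‖(10:ℝ) • θ‖)) ''
        Metric.closedBall ((10:ℝ) • θ) 1) = 0 := by
      have himg : ((fun θ' => max 0 (1/2 - θ' 0 / ‖θ'‖) -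
          max 0 (1/2 - ((10:ℝ) • θ) 0 / ‖(10:ℝ) • θ‖)) ''
          Metric.closedBall ((10:ℝ) • θ) 1) = {0} := by
        apply Subset.antisymm
        · rintro _ ⟨x, hx, rfl⟩
          show max 0 (1/2 - x 0 / ‖x‖) - max 0 (1/2 - ((10:ℝ) • θ) 0 / ‖(10:ℝ) • θ‖) ∈ ({0} : Set ℝ)
          rw [hzero x hx, hL10θ]; simp
        · rintro _ rfl
          refine ⟨(10:ℝ) • θ, Metric.mem_closedBall_self zero_le_one, ?_⟩
          show max 0 (1/2 - ((10:ℝ) • θ) 0 / ‖(10:ℝ) • θ‖) -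
            max 0 (1/2 - ((10:ℝ) • θ) 0 / ‖(10:ℝ) • θ‖) = 0
          rw [hL10θ]; simp
      rw [himg, csSup_singleton]
    -- LHS sup ≥ 1/2
    have hmem : (1:ℝ)/2 ∈ ((fun θ' => max 0 (1/2 - θ' 0 / ‖θ'‖) -
        max 0 (1/2 - θ 0 / ‖θ‖)) '' Metric.closedBall θ 1) := by
      refine ⟨0, ?_, ?_⟩
      · rw [Metric.mem_closedBall, dist_zero_left, hθn]
      · show max 0 (1/2 - (0 : EuclideanSpace ℝ (Fin 2)) 0 / ‖(0 : EuclideanSpace ℝ (Fin 2))‖) -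
            max 0 (1/2 - θ 0 / ‖θ‖) = 1/2
        have h0 : ((0 : EuclideanSpace ℝ (Fin 2)) 0) = (0:ℝ) := rfl
        rw [hLθ, h0, norm_zero]
        norm_num
    have hbdd : BddAbove ((fun θ' => max 0 (1/2 - θ' 0 / ‖θ'‖) -
        max 0 (1/2 - θ 0 / ‖θ‖)) '' Metric.closedBall θ 1) := by
      refine ⟨3/2, ?_⟩
      rintro _ ⟨x, hx, rfl⟩
      have hLx : max 0 (1/2 - x 0 / ‖x‖) ≤ 3/2 := by
        rcases eq_or_ne x 0 with rfl | hxne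
        · have h0 : ((0 : EuclideanSpace ℝ (Fin 2)) 0) = (0:ℝ) := rfl
          rw [h0, norm_zero]; norm_num
        · have hxp : (0:ℝ) < ‖x‖ := norm_pos_iff.mpr hxne
          have h1 : x 0 / ‖x‖ ≥ -1 := by
            rw [ge_iff_le, neg_le, ← neg_div, div_le_one hxp]
            have := coord_abs_le_norm x
            have := neg_abs_le (x 0)
            linarith
          apply max_le (by norm_num)
          linarith
      have : (0:ℝ) ≤ max 0 (1/2 - θ 0 / ‖θ‖) := le_max_left _ _
      linarith
    have hLHS : (1:ℝ)/2 ≤ sSup ((fun θ' => max 0 (1/2 - θ' 0 / ‖θ'‖) -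
        max 0 (1/2 - θ 0 / ‖θ‖)) '' Metric.closedBall θ 1) :=
      le_csSup hbdd hmem
    rw [hRHS]
    intro h
    rw [h] at hLHS
    norm_num at hLHS
end
end

section
/- Let E be a finite-dimensional real inner product space, L : E → ℝ continuous and Fréchet differentiable at θ ∈ E, v ∈ E a fixed vector, and p ≥ 1 a real number. Then lim_{δ→0⁺} δ^{-1/p} (∫_{-δ}^{δ} |(L(θ + t·v) − L(θ))/δ|^p dt)^{1/p} = (2/(p+1))^{1/p} · |⟨∇L(θ), v⟩|, where ∇L(θ) denotes the gradient of L at θ. -/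
open MeasureTheory Filter Set RealInnerProductSpace
open scoped Topology

noncomputable section

/-- For `L` continuous and Fréchet differentiable at `θ`, the directional δ-Lᵖ quantity
along a fixed direction `v` tends, as `δ → 0⁺`, to `(2/(p+1))^{1/p} · |⟨∇L(θ), v⟩|`. -/
theorem directional_Lp_limit {E : Type*} [NormedAddCommGroup E] [InnerProductSpace ℝ E]
    [FiniteDimensional ℝ E] (L : E → ℝ) (hL : Continuous L) (θ : E)
    (hdiff : DifferentiableAt ℝ L θ) (v : E) (p : ℝ) (hp : 1 ≤ p) :
    Tendsto
      (fun δ : ℝ => δ ^ (-(1 / p)) *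
        (∫ t in (-δ)..δ, |(L (θ + t • v) - L θ) / δ| ^ p) ^ (1 / p))
      (nhdsWithin 0 (Set.Ioi 0))
      (nhds ((2 / (p + 1)) ^ (1 / p) * |⟪gradient L θ, v⟫|)) := by
  have hp0 : (0:ℝ) < p := lt_of_lt_of_le one_pos hp
  set c : ℝ := ⟪gradient L θ, v⟫ with hc
  set g : ℝ → ℝ := fun t => L (θ + t • v) with hg
  have hgc : Continuous g := hL.comp (by continuity)
  have hg0 : g 0 = L θ := by simp [hg]
  have hderiv : HasDerivAt g c 0 := by
    have h1 : HasDerivAt (fun t : ℝ => θ + t • v) v 0 := by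
      simpa using ((hasDerivAt_id (0:ℝ)).smul_const v).const_add θ
    have h2 : HasFDerivAt L (InnerProductSpace.toDual ℝ E (gradient L θ)) θ :=
      hdiff.hasGradientAt.hasFDerivAt
    have h2' : HasFDerivAt L (InnerProductSpace.toDual ℝ E (gradient L θ))
        ((fun t : ℝ => θ + t • v) 0) := by simpa using h2
    have h3 := h2'.comp_hasDerivAt 0 h1
    exact h3
  -- the rescaled family
  set F : ℝ → ℝ → ℝ := fun δ s => |(g (δ * s) - g 0) / δ| ^ p with hF
  -- continuity of each F δ
  have hFc : ∀ δ : ℝ, δ ≠ 0 → Continuous (F δ) := by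
    intro δ hδ
    apply Continuous.rpow_const
    · exact (((hgc.comp (continuous_const.mul continuous_id)).sub continuous_const).div_const δ).abs
    · intro x; exact Or.inr hp0.le
  -- bound from differentiability
  obtain ⟨r, hr, hrb⟩ : ∃ r > 0, ∀ t : ℝ, |t| < r → |g t - g 0| ≤ (|c| + 1) * |t| := by
    have h := (hasDerivAt_iff_isLittleO.mp hderiv).def one_pos
    rw [Metric.eventually_nhds_iff] at h
    obtain ⟨ε, hε, hεb⟩ := h
    refine ⟨ε, hε, fun t ht => ?_⟩
    have := hεb (by simpa [Real.dist_eq] using ht : dist t 0 < ε)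
    simp only [Real.norm_eq_abs, sub_zero, one_mul, smul_eq_mul] at this
    calc |g t - g 0| = |(g t - g 0 - t * c) + t * c| := by congr 1; ring
      _ ≤ |g t - g 0 - t * c| + |t * c| := abs_add_le _ _
      _ ≤ |t| + |t| * |c| := by rw [abs_mul]; exact add_le_add this le_rfl
      _ = (|c| + 1) * |t| := by ring
  -- dominated convergence
  have key : Tendsto (fun δ => ∫ s in (-1:ℝ)..1, F δ s) (𝓝[>] (0:ℝ))
      (𝓝 (∫ s in (-1:ℝ)..1, |c * s| ^ p)) := by
    apply intervalIntegral.tendsto_integral_filter_of_dominated_convergence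
      (fun _ => (|c| + 1) ^ p)
    · filter_upwards [self_mem_nhdsWithin] with δ hδ
      exact ((hFc δ (ne_of_gt hδ)).aestronglyMeasurable)
    · filter_upwards [Ioo_mem_nhdsGT_of_mem ⟨le_refl 0, hr⟩]
        with δ hδ
      obtain ⟨hδ0, hδr⟩ := hδ
      refine Eventually.of_forall fun s hs => ?_
      have hs1 : |s| ≤ 1 := by
        rw [uIoc_of_le (by norm_num : (-1:ℝ) ≤ 1)] at hs
        rw [abs_le]; exact ⟨le_of_lt hs.1, hs.2⟩
      have hδs : |δ * s| < r := by
        rw [abs_mul, abs_of_pos hδ0]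
        calc δ * |s| ≤ δ * 1 := by nlinarith
          _ < r := by linarith
      have hb : |(g (δ * s) - g 0) / δ| ≤ |c| + 1 := by
        rw [abs_div, abs_of_pos hδ0, div_le_iff₀ hδ0]
        calc |g (δ * s) - g 0| ≤ (|c| + 1) * |δ * s| := hrb _ hδs
          _ = (|c| + 1) * (δ * |s|) := by rw [abs_mul, abs_of_pos hδ0]
          _ ≤ (|c| + 1) * (δ * 1) := by
              have h1 : (0:ℝ) ≤ |c| + 1 := by positivity
              have h2 : δ * |s| ≤ δ * 1 := mul_le_mul_of_nonneg_left hs1 hδ0.le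
              exact mul_le_mul_of_nonneg_left h2 h1
          _ = (|c| + 1) * δ := by ring
      have : F δ s ≤ (|c| + 1) ^ p := Real.rpow_le_rpow (abs_nonneg _) hb hp0.le
      rwa [Real.norm_eq_abs, abs_of_nonneg (Real.rpow_nonneg (abs_nonneg _) p)]
    · exact intervalIntegrable_const
    · refine Eventually.of_forall fun s _ => ?_
      rcases eq_or_ne s 0 with rfl | hs
      · simp only [hF, mul_zero, sub_self, zero_div, abs_zero, Real.zero_rpow hp0.ne']
        simpa [Real.zero_rpow hp0.ne'] using tendsto_const_nhds
      · have hslope : Tendsto (slope g 0) (𝓝[≠] (0:ℝ)) (𝓝 c) :=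
          hasDerivAt_iff_tendsto_slope.mp hderiv
        have hcomp : Tendsto (fun δ : ℝ => δ * s) (𝓝[>] (0:ℝ)) (𝓝[≠] (0:ℝ)) := by
          apply tendsto_nhdsWithin_of_tendsto_nhds_of_eventually_within
          · have : Tendsto (fun δ : ℝ => δ * s) (𝓝 (0:ℝ)) (𝓝 (0 * s)) :=
              (continuous_id.mul continuous_const).tendsto 0
            simpa using this.mono_left nhdsWithin_le_nhds
          · filter_upwards [self_mem_nhdsWithin] with δ hδ
            exact mul_ne_zero (ne_of_gt hδ) hs
        have h1 : Tendsto (fun δ : ℝ => slope g 0 (δ * s) * s) (𝓝[>] (0:ℝ)) (𝓝 (c * s)) :=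
          (hslope.comp hcomp).mul_const s
        have h2 : Tendsto (fun δ : ℝ => (g (δ * s) - g 0) / δ) (𝓝[>] (0:ℝ)) (𝓝 (c * s)) := by
          apply h1.congr'
          filter_upwards [self_mem_nhdsWithin] with δ hδ
          have hδne : δ ≠ 0 := ne_of_gt (mem_Ioi.mp hδ)
          rw [slope_def_field, sub_zero]
          field_simp
        have := (h2.abs).rpow_const (Or.inr hp0.le)
        simpa [hF] using this
  -- compute the limit integral
  have habs : Continuous (fun s : ℝ => |s| ^ p) := by
    apply Continuous.rpow_const continuous_abs
    intro x; exact Or.inr hp0.le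
  have hint01 : (∫ s in (0:ℝ)..1, |s| ^ p) = 1 / (p + 1) := by
    rw [intervalIntegral.integral_congr (g := fun s : ℝ => s ^ p)
      (fun s hs => by
        rw [uIcc_of_le (by norm_num : (0:ℝ) ≤ 1)] at hs
        rw [abs_of_nonneg hs.1])]
    rw [integral_rpow (Or.inl (by linarith))]
    rw [Real.one_rpow, Real.zero_rpow (by positivity)]
    ring
  have hintneg : (∫ s in (-1:ℝ)..0, |s| ^ p) = 1 / (p + 1) := by
    have := intervalIntegral.integral_comp_neg (a := (0:ℝ)) (b := 1) (fun s : ℝ => |s| ^ p)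
    simp only [abs_neg, neg_zero] at this
    rw [← this, hint01]
  have hlimval : (∫ s in (-1:ℝ)..1, |c * s| ^ p) = |c| ^ p * (2 / (p + 1)) := by
    have : (∫ s in (-1:ℝ)..1, |c * s| ^ p) = ∫ s in (-1:ℝ)..1, |c| ^ p * |s| ^ p := by
      apply intervalIntegral.integral_congr
      intro s _
      show |c * s| ^ p = |c| ^ p * |s| ^ p
      rw [abs_mul, Real.mul_rpow (abs_nonneg _) (abs_nonneg _)]
    rw [this, intervalIntegral.integral_const_mul]
    have : (∫ s in (-1:ℝ)..1, |s| ^ p) =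
        (∫ s in (-1:ℝ)..0, |s| ^ p) + ∫ s in (0:ℝ)..1, |s| ^ p := by
      rw [intervalIntegral.integral_add_adjacent_intervals] <;>
        exact habs.intervalIntegrable _ _
    rw [this, hintneg, hint01]; ring
  rw [hlimval] at key
  -- final value after rpow
  have hfinal : (|c| ^ p * (2 / (p + 1))) ^ (1 / p) = (2 / (p + 1)) ^ (1 / p) * |c| := by
    rw [Real.mul_rpow (Real.rpow_nonneg (abs_nonneg _) _) (by positivity),
      ← Real.rpow_mul (abs_nonneg c), mul_one_div_cancel hp0.ne', Real.rpow_one, mul_comm]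
  have keyp : Tendsto (fun δ => (∫ s in (-1:ℝ)..1, F δ s) ^ (1 / p)) (𝓝[>] (0:ℝ))
      (𝓝 ((2 / (p + 1)) ^ (1 / p) * |c|)) := by
    rw [← hfinal]
    exact key.rpow_const (Or.inr (by positivity))
  apply keyp.congr'
  filter_upwards [self_mem_nhdsWithin] with δ hδ
  have hδ0 : (0:ℝ) < δ := hδ
  have hδne : δ ≠ 0 := ne_of_gt hδ0
  have hchg : (∫ t in (-δ)..δ, |(L (θ + t • v) - L θ) / δ| ^ p)
      = δ * ∫ s in (-1:ℝ)..1, F δ s := by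
    have := intervalIntegral.integral_comp_mul_left
      (a := (-1:ℝ)) (b := 1) (fun t : ℝ => |(g t - g 0) / δ| ^ p) hδne
    simp only [mul_neg_one, mul_one, smul_eq_mul] at this
    have heq : (∫ t in (-δ)..δ, |(L (θ + t • v) - L θ) / δ| ^ p)
        = ∫ t in (-δ)..δ, |(g t - g 0) / δ| ^ p := by
      apply intervalIntegral.integral_congr
      intro t _
      rw [hg0]
    rw [heq, show (∫ s in (-1:ℝ)..1, F δ s) = δ⁻¹ * ∫ t in (-δ)..δ, |(g t - g 0) / δ| ^ p
      from this]
    field_simp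
  have hI : 0 ≤ ∫ s in (-1:ℝ)..1, F δ s :=
    intervalIntegral.integral_nonneg (by norm_num)
      (fun s _ => Real.rpow_nonneg (abs_nonneg _) p)
  rw [hchg, Real.mul_rpow hδ0.le hI, ← mul_assoc, ← Real.rpow_add hδ0, neg_add_cancel,
    Real.rpow_zero, one_mul]
end
end

section
/- Let L : E → ℝ be continuously differentiable, p ≥ 1 a real number, and λ > 0. Then for every θ ∈ E the limit R(θ) := lim_{δ→0⁺} (‖L‖_p^{δ,θ})^p exists and equals (2/(p+1)) · sup_{v ∈ φ(θ)} |⟨∇L(θ), v⟩|^p; moreover, if θ* is a global minimizer of L, then θ* is also a global minimizer of the regularized objective θ ↦ L(θ) + λ·R(θ). -/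
open MeasureTheory Filter Set RealInnerProductSpace

set_option linter.unusedSectionVars false
set_option maxHeartbeats 1000000
noncomputable section

variable {N₁ : ℕ} {n : Fin N₁ → ℕ} {F : Type*} [NormedAddCommGroup F]
  [InnerProductSpace ℝ F] [FiniteDimensional ℝ F]

lemma phi_norm (θ : BNSpace n F) {v : BNSpace n F} (hv : v ∈ phi θ) :
    ‖v‖ = Real.sqrt (‖θ.ofLp.1‖ ^ 2 + 1) := by
  have h1 : ‖v.ofLp.1‖ ^ 2 = ‖θ.ofLp.1‖ ^ 2 := by
    rw [PiLp.norm_sq_eq_of_L2, PiLp.norm_sq_eq_of_L2]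
    exact Finset.sum_congr rfl fun i _ => by rw [hv.1 i]
  have h2 : ‖v‖ ^ 2 = ‖θ.ofLp.1‖ ^ 2 + 1 := by
    rw [WithLp.prod_norm_sq_eq_of_L2]
    show ‖v.ofLp.1‖ ^ 2 + ‖v.ofLp.2‖ ^ 2 = _
    rw [h1, hv.2]; ring
  rw [← h2, Real.sqrt_sq (norm_nonneg v)]

lemma phi_isCompact (θ : BNSpace n F) : IsCompact (phi θ) := by
  apply Metric.isCompact_of_isClosed_isBounded
  · have h1 : ∀ i : Fin N₁, IsClosed {v : BNSpace n F | ‖v.ofLp.1 i‖ = ‖θ.ofLp.1 i‖} := fun i =>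
      isClosed_eq (((continuous_apply i).comp ((PiLp.continuous_ofLp 2 _).comp (continuous_fst.comp (WithLp.prod_continuous_ofLp ..)))).norm) continuous_const
    have h2 : IsClosed {v : BNSpace n F | ‖v.ofLp.2‖ = 1} :=
      isClosed_eq (continuous_snd.comp (WithLp.prod_continuous_ofLp ..)).norm continuous_const
    have : phi θ = (⋂ i, {v : BNSpace n F | ‖v.ofLp.1 i‖ = ‖θ.ofLp.1 i‖}) ∩ {v | ‖v.ofLp.2‖ = 1} := by
      ext v; simp [phi, Set.mem_iInter]
    rw [this]
    exact (isClosed_iInter h1).inter h2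
  · rw [isBounded_iff_forall_norm_le]
    exact ⟨Real.sqrt (‖θ.ofLp.1‖ ^ 2 + 1), fun v hv => le_of_eq (phi_norm θ hv)⟩

lemma phi_nonempty [Nontrivial F] (θ : BNSpace n F) : (phi θ).Nonempty := by
  obtain ⟨u, hu⟩ := exists_norm_eq F (zero_le_one (α := ℝ))
  exact ⟨WithLp.toLp 2 (θ.ofLp.1, u), fun i => rfl, hu⟩

lemma integral_abs_rpow {p δ : ℝ} (hp : 0 < p) (hδ : 0 < δ) :
    ∫ t in (-δ)..δ, |t| ^ p = 2 * δ ^ (p + 1) / (p + 1) := by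
  have hcont : Continuous fun t : ℝ => |t| ^ p :=
    continuous_abs.rpow_const fun x => Or.inr hp.le
  have hint : ∀ a b : ℝ, IntervalIntegrable (fun t : ℝ => |t| ^ p) volume a b :=
    fun a b => hcont.intervalIntegrable a b
  have hpos : ∫ t in (0:ℝ)..δ, |t| ^ p = δ ^ (p + 1) / (p + 1) := by
    have h1 : ∫ t in (0:ℝ)..δ, |t| ^ p = ∫ t in (0:ℝ)..δ, t ^ p := by
      apply intervalIntegral.integral_congr
      intro t ht
      rw [Set.uIcc_of_le hδ.le] at ht
      simp only []
      rw [abs_of_nonneg ht.1]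
    rw [h1, integral_rpow (Or.inl (by linarith))]
    rw [Real.zero_rpow (by positivity)]
    ring
  have hneg : ∫ t in (-δ)..(0:ℝ), |t| ^ p = δ ^ (p + 1) / (p + 1) := by
    have h1 : ∫ t in (0:ℝ)..δ, |(-t)| ^ p = ∫ t in (-δ)..(0:ℝ), |t| ^ p := by
      simpa using intervalIntegral.integral_comp_neg (a := (0:ℝ)) (b := δ)
        (f := fun t : ℝ => |t| ^ p)
    rw [← h1]
    simp_rw [abs_neg]
    exact hpos
  rw [← intervalIntegral.integral_add_adjacent_intervals (hint (-δ) 0) (hint 0 δ), hpos, hneg]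
  ring

lemma key_integral {p δ : ℝ} (hp : 0 < p) (hδ : 0 < δ) {a : ℝ} (ha : 0 ≤ a) :
    ∫ t in (-δ)..δ, (a * |t| / δ) ^ p = (a / δ) ^ p * (2 * δ ^ (p + 1) / (p + 1)) := by
  have h1 : ∀ t : ℝ, (a * |t| / δ) ^ p = (a / δ) ^ p * |t| ^ p := by
    intro t
    rw [← Real.mul_rpow (by positivity) (abs_nonneg t)]
    ring_nf
  simp_rw [h1]
  rw [intervalIntegral.integral_const_mul, integral_abs_rpow hp hδ]

lemma key_scalar {p δ : ℝ} (hp : 0 < p) (hδ : 0 < δ) {a : ℝ} (ha : 0 ≤ a) :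
    δ ^ (-(1 / p)) * ((a / δ) ^ p * (2 * δ ^ (p + 1) / (p + 1))) ^ (1 / p)
      = (2 / (p + 1)) ^ (1 / p) * a := by
  have hp1 : (0:ℝ) < p + 1 := by linarith
  have e1 : (a / δ) ^ p * (2 * δ ^ (p + 1) / (p + 1)) = (2 / (p + 1)) * (a ^ p * δ) := by
    rw [Real.div_rpow ha hδ.le]
    have : δ ^ (p + 1) = δ ^ p * δ := by
      rw [Real.rpow_add hδ, Real.rpow_one]
    rw [this]
    field_simp
  rw [e1]
  have h2 : (0:ℝ) ≤ 2 / (p + 1) := by positivity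
  rw [Real.mul_rpow h2 (by positivity), Real.mul_rpow (by positivity) hδ.le,
    ← Real.rpow_mul ha, mul_one_div_cancel hp.ne', Real.rpow_one]
  have h3 : δ ^ (-(1 / p)) * δ ^ (1 / p) = 1 := by
    rw [← Real.rpow_add hδ, neg_add_cancel, Real.rpow_zero]
  calc δ ^ (-(1 / p)) * ((2 / (p + 1)) ^ (1 / p) * (a * δ ^ (1 / p)))
      = (2 / (p + 1)) ^ (1 / p) * a * (δ ^ (-(1 / p)) * δ ^ (1 / p)) := by ring
    _ = (2 / (p + 1)) ^ (1 / p) * a := by rw [h3, mul_one]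

/-- For continuously differentiable `L`, the limit
`R(θ) = lim_{δ→0⁺} (‖L‖_p^{δ,θ})^p` exists and equals
`(2/(p+1)) · sup_{v ∈ φ(θ)} |⟨∇L(θ), v⟩|^p`; moreover any global minimizer of `L` is
also a global minimizer of `θ ↦ L(θ) + λ·R(θ)`. -/
theorem bnSharpness_regularizer_limit_and_min (L : BNSpace n F → ℝ) (hL : ContDiff ℝ 1 L)
    (p lam : ℝ) (hp : 1 ≤ p) (hlam : 0 < lam) :
    (∀ θ : BNSpace n F,
      Tendsto (fun δ : ℝ => bnSharpness L p δ θ ^ p) (nhdsWithin 0 (Set.Ioi 0))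
        (nhds ((2 / (p + 1)) *
          sSup ((fun v => |⟪gradient L θ, v⟫| ^ p) '' phi θ)))) ∧
    (∀ θs : BNSpace n F, (∀ θ, L θs ≤ L θ) →
      ∀ θ : BNSpace n F,
        L θs + lam * ((2 / (p + 1)) * sSup ((fun v => |⟪gradient L θs, v⟫| ^ p) '' phi θs)) ≤
        L θ + lam * ((2 / (p + 1)) * sSup ((fun v => |⟪gradient L θ, v⟫| ^ p) '' phi θ))) := by
  have hp0 : (0:ℝ) < p := lt_of_lt_of_le one_pos hp
  have hp1 : (0:ℝ) < p + 1 := by linarith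
  constructor
  · intro θ
    rcases subsingleton_or_nontrivial F with hF | hF
    · -- `phi θ` is empty
      have hphi : phi θ = (∅ : Set (BNSpace n F)) := by
        ext v
        simp only [phi, mem_setOf_eq, mem_empty_iff_false, iff_false, not_and]
        intro _
        have hv2 : v.ofLp.2 = 0 := Subsingleton.elim _ _
        rw [hv2, norm_zero]
        norm_num
      simp only [bnSharpness, hphi, image_empty, Real.sSup_empty, mul_zero,
        Real.zero_rpow hp0.ne']
      exact tendsto_const_nhds
    · -- main case
      set g := gradient L θ with hg
      set R := Real.sqrt (‖θ.ofLp.1‖ ^ 2 + 1) with hRdef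
      have hR1 : (1:ℝ) ≤ R := by
        have h := Real.sqrt_le_sqrt (show (1:ℝ) ≤ ‖θ.ofLp.1‖ ^ 2 + 1 by nlinarith [sq_nonneg ‖θ.ofLp.1‖])
        simpa [hRdef] using h
      have hR0 : (0:ℝ) < R := lt_of_lt_of_le one_pos hR1
      have hne : (phi θ).Nonempty := phi_nonempty θ
      obtain ⟨v₀, hv₀mem, hv₀max⟩ := (phi_isCompact θ).exists_isMaxOn hne
        ((continuous_const.inner continuous_id).abs.continuousOn
          (f := fun v : BNSpace n F => |⟪g, v⟫|))
      set c : ℝ := |⟪g, v₀⟫| with hcdef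
      have hc0 : 0 ≤ c := abs_nonneg _
      have hcmax : ∀ v ∈ phi θ, |⟪g, v⟫| ≤ c := fun v hv => hv₀max hv
      have hsSup : sSup ((fun v => |⟪g, v⟫| ^ p) '' phi θ) = c ^ p := by
        apply IsGreatest.csSup_eq
        constructor
        · exact ⟨v₀, hv₀mem, rfl⟩
        · rintro x ⟨v, hv, rfl⟩
          exact Real.rpow_le_rpow (abs_nonneg _) (hcmax v hv) hp0.le
      rw [hsSup]
      set T : ℝ := (2 / (p + 1)) * c ^ p with hTdef
      rw [Metric.tendsto_nhdsWithin_nhds]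
      intro ε hε
      -- choose η > 0 with good bounds
      have hcontU : Tendsto (fun η : ℝ => (2 / (p + 1)) * (c + η * R) ^ p) (nhds 0) (nhds T) := by
        have h1 : ContinuousAt (fun η : ℝ => (2 / (p + 1)) * (c + η * R) ^ p) 0 := by
          apply ContinuousAt.mul continuousAt_const
          apply ContinuousAt.rpow_const (by fun_prop) (Or.inr hp0.le)
        have := h1.tendsto
        simpa [hTdef] using this
      have hcontL : Tendsto (fun η : ℝ => (2 / (p + 1)) * (max 0 (c - η * R)) ^ p)
          (nhds 0) (nhds T) := by
        have h1 : ContinuousAt (fun η : ℝ => (2 / (p + 1)) * (max 0 (c - η * R)) ^ p) 0 := by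
          apply ContinuousAt.mul continuousAt_const
          apply ContinuousAt.rpow_const (by fun_prop) (Or.inr hp0.le)
        have := h1.tendsto
        simpa [hTdef, max_eq_right hc0] using this
      have hev : ∀ᶠ η in nhdsWithin 0 (Set.Ioi (0:ℝ)),
          ((2 / (p + 1)) * (c + η * R) ^ p < T + ε ∧
            T - ε < (2 / (p + 1)) * (max 0 (c - η * R)) ^ p) ∧ 0 < η := by
        apply Filter.Eventually.and _ self_mem_nhdsWithin
        apply Filter.Eventually.filter_mono nhdsWithin_le_nhds
        exact (hcontU.eventually_lt_const (by linarith)).and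
          (hcontL.eventually_const_lt (by linarith))
      obtain ⟨η, ⟨⟨hηU, hηL⟩, hη0⟩⟩ := hev.exists
      -- continuity of the derivative
      have hfc : Continuous (fderiv ℝ L) := hL.continuous_fderiv one_ne_zero
      obtain ⟨r, hr0, hr⟩ := (Metric.continuousAt_iff (f := fderiv ℝ L) (a := θ)).mp (by exact hfc.continuousAt) η hη0
      refine ⟨r / R, by positivity, ?_⟩
      intro δ hδIoi hδdist
      have hδ : (0:ℝ) < δ := hδIoi
      have hδR : δ * R < r := by
        rw [Real.dist_eq, sub_zero, abs_of_pos hδ] at hδdist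
        calc δ * R < (r / R) * R := by exact mul_lt_mul_of_pos_right hδdist hR0
          _ = r := by field_simp
      -- uniform derivative bound on the closed ball
      have hballbound : ∀ x ∈ Metric.closedBall θ (δ * R), ‖fderiv ℝ L x - fderiv ℝ L θ‖ ≤ η := by
        intro x hx
        have hxr : dist x θ < r := lt_of_le_of_lt (Metric.mem_closedBall.mp hx) hδR
        have h := hr hxr
        have e := dist_eq_norm (fderiv ℝ L x) (fderiv ℝ L θ)
        exact (e ▸ h).le
      have hdiffall : ∀ x ∈ Metric.closedBall θ (δ * R), DifferentiableAt ℝ L x :=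
        fun x _ => hL.differentiable one_ne_zero x
      have hinner_eq : ∀ v : BNSpace n F, ⟪g, v⟫ = fderiv ℝ L θ v := fun v =>
        InnerProductSpace.toDual_symm_apply
      have hest : ∀ v ∈ phi θ, ∀ t : ℝ, |t| ≤ δ →
          |L (θ + t • v) - L θ - t * ⟪g, v⟫| ≤ η * (|t| * R) := by
        intro v hv t ht
        have hvnorm : ‖v‖ = R := phi_norm θ hv
        have hmem : θ + t • v ∈ Metric.closedBall θ (δ * R) := by
          rw [Metric.mem_closedBall, dist_eq_norm, add_sub_cancel_left, norm_smul,
            Real.norm_eq_abs, hvnorm]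
          exact mul_le_mul_of_nonneg_right ht hR0.le
        have hmemθ : θ ∈ Metric.closedBall θ (δ * R) := Metric.mem_closedBall_self (by positivity)
        have key := Convex.norm_image_sub_le_of_norm_fderiv_le' hdiffall hballbound
          (convex_closedBall θ (δ * R)) hmemθ hmem
        rw [add_sub_cancel_left, norm_smul, Real.norm_eq_abs, hvnorm] at key
        have hmap : (fderiv ℝ L θ) (t • v) = t * ⟪g, v⟫ := by
          rw [(fderiv ℝ L θ).map_smul, smul_eq_mul, hinner_eq]
        rw [hmap] at key
        exact key
      -- continuity of integrands
      have hLc : Continuous L := hL.continuous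
      have hcont_int : ∀ v : BNSpace n F, Continuous fun t : ℝ =>
          |(L (θ + t • v) - L θ) / δ| ^ p := by
        intro v
        apply Continuous.rpow_const _ (fun x => Or.inr hp0.le)
        apply Continuous.abs
        apply Continuous.div_const
        exact (hLc.comp (continuous_const.add (continuous_id.smul continuous_const))).sub
          continuous_const
      have hcont_pow : ∀ a : ℝ, Continuous fun t : ℝ => (a * |t| / δ) ^ p := by
        intro a
        apply Continuous.rpow_const _ (fun x => Or.inr hp0.le)
        exact (continuous_const.mul continuous_abs).div_const δ
      set K : ℝ := (2 / (p + 1)) ^ (1 / p) with hKdef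
      have hK0 : 0 ≤ K := Real.rpow_nonneg (by positivity) _
      set C : ℝ := 2 * δ ^ (p + 1) / (p + 1) with hCdef
      -- upper bound for each v
      have hupper : ∀ v ∈ phi θ,
          δ ^ (-(1 / p)) * (∫ t in (-δ)..δ, |(L (θ + t • v) - L θ) / δ| ^ p) ^ (1 / p)
            ≤ K * (c + η * R) := by
        intro v hv
        have ha : (0:ℝ) ≤ |⟪g, v⟫| + η * R := by positivity
        have hIle : (∫ t in (-δ)..δ, |(L (θ + t • v) - L θ) / δ| ^ p)
            ≤ ((|⟪g, v⟫| + η * R) / δ) ^ p * C := by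
          rw [hCdef, ← key_integral hp0 hδ ha]
          apply intervalIntegral.integral_mono_on (by linarith)
            ((hcont_int v).intervalIntegrable _ _) ((hcont_pow _).intervalIntegrable _ _)
          intro t htI
          have ht : |t| ≤ δ := abs_le.mpr ⟨htI.1, htI.2⟩
          apply Real.rpow_le_rpow (abs_nonneg _) _ hp0.le
          rw [abs_div, abs_of_pos hδ]
          gcongr
          calc |L (θ + t • v) - L θ|
              = |(L (θ + t • v) - L θ - t * ⟪g, v⟫) + t * ⟪g, v⟫| := by congr 1; ring
            _ ≤ |L (θ + t • v) - L θ - t * ⟪g, v⟫| + |t * ⟪g, v⟫| := abs_add_le _ _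
            _ ≤ η * (|t| * R) + |t| * |⟪g, v⟫| := by
                rw [abs_mul]
                linarith [hest v hv t ht]
            _ = (|⟪g, v⟫| + η * R) * |t| := by ring
        have hInonneg : 0 ≤ ∫ t in (-δ)..δ, |(L (θ + t • v) - L θ) / δ| ^ p :=
          intervalIntegral.integral_nonneg (by linarith)
            fun u _ => Real.rpow_nonneg (abs_nonneg _) _
        have h6 := Real.rpow_le_rpow hInonneg hIle (by positivity : (0:ℝ) ≤ 1 / p)
        have hres := mul_le_mul_of_nonneg_left h6 (Real.rpow_pos_of_pos hδ (-(1 / p))).le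
        calc δ ^ (-(1 / p)) * (∫ t in (-δ)..δ, |(L (θ + t • v) - L θ) / δ| ^ p) ^ (1 / p)
            ≤ δ ^ (-(1 / p)) * (((|⟪g, v⟫| + η * R) / δ) ^ p * C) ^ (1 / p) := hres
          _ = K * (|⟪g, v⟫| + η * R) := by rw [hCdef, key_scalar hp0 hδ ha]
          _ ≤ K * (c + η * R) := by
              apply mul_le_mul_of_nonneg_left _ hK0
              linarith [hcmax v hv]
      -- lower bound at v₀
      set m : ℝ := max 0 (c - η * R) with hmdef
      have hm0 : 0 ≤ m := le_max_left _ _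
      have hlower : K * m ≤
          δ ^ (-(1 / p)) * (∫ t in (-δ)..δ, |(L (θ + t • v₀) - L θ) / δ| ^ p) ^ (1 / p) := by
        have hIge : (m / δ) ^ p * C ≤ ∫ t in (-δ)..δ, |(L (θ + t • v₀) - L θ) / δ| ^ p := by
          rw [hCdef, ← key_integral hp0 hδ hm0]
          apply intervalIntegral.integral_mono_on (by linarith)
            ((hcont_pow _).intervalIntegrable _ _) ((hcont_int v₀).intervalIntegrable _ _)
          intro t htI
          have ht : |t| ≤ δ := abs_le.mpr ⟨htI.1, htI.2⟩
          apply Real.rpow_le_rpow (by positivity) _ hp0.le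
          rw [abs_div, abs_of_pos hδ]
          gcongr
          have h1 := hest v₀ hv₀mem t ht
          have h2 : |t * ⟪g, v₀⟫| - |L (θ + t • v₀) - L θ| ≤ η * (|t| * R) := by
            calc |t * ⟪g, v₀⟫| - |L (θ + t • v₀) - L θ|
                ≤ |t * ⟪g, v₀⟫ - (L (θ + t • v₀) - L θ)| := abs_sub_abs_le_abs_sub _ _
              _ = |L (θ + t • v₀) - L θ - t * ⟪g, v₀⟫| := by rw [abs_sub_comm]
              _ ≤ η * (|t| * R) := h1
          have h3 : |t * ⟪g, v₀⟫| = |t| * c := by rw [abs_mul, hcdef]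
          rcases le_total (c - η * R) 0 with hle | hle
          · rw [hmdef, max_eq_left hle, zero_mul]
            exact abs_nonneg _
          · rw [hmdef, max_eq_right hle]
            nlinarith [abs_nonneg t]
        have hInn : (0:ℝ) ≤ (m / δ) ^ p * C := by
          rw [hCdef]
          positivity
        have h4 := Real.rpow_le_rpow hInn hIge (by positivity : (0:ℝ) ≤ 1 / p)
        have h5 := mul_le_mul_of_nonneg_left h4 (Real.rpow_pos_of_pos hδ (-(1 / p))).le
        calc K * m = δ ^ (-(1 / p)) * ((m / δ) ^ p * C) ^ (1 / p) := by
              rw [hCdef, key_scalar hp0 hδ hm0]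
          _ ≤ _ := h5
      -- assemble
      set A := (fun v => δ ^ (-(1 / p)) *
        (∫ t in (-δ)..δ, |(L (θ + t • v) - L θ) / δ| ^ p) ^ (1 / p)) '' phi θ with hAdef
      have hbdd : ∀ x ∈ A, x ≤ K * (c + η * R) := by
        rintro x ⟨v, hv, rfl⟩
        exact hupper v hv
      have hAne : A.Nonempty := hne.image _
      have hsup_le : sSup A ≤ K * (c + η * R) := csSup_le hAne hbdd
      have hle_sup : K * m ≤ sSup A :=
        le_trans hlower (le_csSup ⟨K * (c + η * R), fun x hx => hbdd x hx⟩ ⟨v₀, hv₀mem, rfl⟩)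
      have hsup0 : 0 ≤ sSup A := le_trans (by positivity) hle_sup
      have hbn : bnSharpness L p δ θ = sSup A := rfl
      rw [Real.dist_eq, hbn]
      have hA1 : (sSup A) ^ p ≤ (K * (c + η * R)) ^ p :=
        Real.rpow_le_rpow hsup0 hsup_le hp0.le
      have hA2 : (K * m) ^ p ≤ (sSup A) ^ p :=
        Real.rpow_le_rpow (by positivity) hle_sup hp0.le
      have hKm : (K * m) ^ p = (2 / (p + 1)) * m ^ p := by
        rw [Real.mul_rpow hK0 hm0, hKdef, ← Real.rpow_mul (by positivity),
          one_div_mul_cancel hp0.ne', Real.rpow_one]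
      have hKc : (K * (c + η * R)) ^ p = (2 / (p + 1)) * (c + η * R) ^ p := by
        rw [Real.mul_rpow hK0 (by positivity), hKdef, ← Real.rpow_mul (by positivity),
          one_div_mul_cancel hp0.ne', Real.rpow_one]
      rw [abs_lt]
      constructor
      · rw [hKm] at hA2
        linarith
      · rw [hKc] at hA1
        linarith
  · -- second part: minimizer
    intro θs hmin θ
    have hgrad : gradient L θs = 0 := by
      have hloc : IsLocalMin L θs := Filter.Eventually.of_forall fun x => hmin x
      have h0 := hloc.fderiv_eq_zero
      unfold gradient
      rw [h0, map_zero]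
    have hzero : sSup ((fun v => |⟪gradient L θs, v⟫| ^ p) '' phi θs) = 0 := by
      rw [hgrad]
      apply le_antisymm
      · apply Real.sSup_nonpos
        rintro x ⟨v, hv, rfl⟩
        simp [Real.zero_rpow hp0.ne']
      · apply Real.sSup_nonneg
        rintro x ⟨v, hv, rfl⟩
        exact Real.rpow_nonneg (abs_nonneg _) _
    have hpos : 0 ≤ sSup ((fun v => |⟪gradient L θ, v⟫| ^ p) '' phi θ) := by
      apply Real.sSup_nonneg
      rintro x ⟨v, hv, rfl⟩
      exact Real.rpow_nonneg (abs_nonneg _) _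
    rw [hzero]
    have h1 := hmin θ
    have h2 : 0 ≤ lam * ((2 / (p + 1)) * sSup ((fun v => |⟪gradient L θ, v⟫| ^ p) '' phi θ)) :=
      mul_nonneg hlam.le (mul_nonneg (by positivity) hpos)
    have h3 : lam * ((2 / (p + 1)) * (0:ℝ)) = 0 := by ring
    linarith
end
end

section
/- Trace sharpness is not scale invariant: there exist a dimension n ≥ 2, a twice continuously differentiable function L : EuclideanSpace ℝ n → ℝ defined on {x : x ≠ 0} satisfying L(c • x) = L(x) for every c > 0 and every x ≠ 0, together with a point θ ≠ 0 and a scalar c > 0, c ≠ 1, such that the trace of the Hessian of L at c • θ differs from the trace of the Hessian of L at θ. -/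
open MeasureTheory Filter Set

noncomputable section
namespace TSNSI

abbrev E := EuclideanSpace ℝ (Fin 2)

def P (i : Fin 2) : E →L[ℝ] ℝ := EuclideanSpace.proj i

def L (x : E) : ℝ := (x 0)^2 / ((x 0)^2 + (x 1)^2)

def d (x : E) : ℝ := (x 0)^2 + (x 1)^2

lemma hP (i : Fin 2) (x : E) : HasFDerivAt (fun x : E => x i) (P i) x :=
  (P i).hasFDerivAt.congr_of_eventuallyEq (Filter.Eventually.of_forall fun y => rfl)

lemma dpos {x : E} (hx : x ≠ 0) : 0 < d x := by
  have : ∃ i, x i ≠ 0 := by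
    by_contra h
    push_neg at h
    exact hx (by ext i; exact h i)
  rcases this with ⟨i, hi⟩
  fin_cases i
  · exact add_pos_of_pos_of_nonneg (by positivity) (sq_nonneg _)
  · exact add_pos_of_nonneg_of_pos (sq_nonneg _) (by positivity)

end TSNSI

namespace TSNSI

lemma hsq (i : Fin 2) (x : E) : HasFDerivAt (fun x : E => (x i)^2) ((2 * x i) • P i) x := by
  have h : (fun x : E => (x i)^2) = fun x : E => x i * x i := by funext y; ring
  rw [h]
  have := (hP i x).mul (hP i x)
  refine this.congr_fderiv (Eq.symm ?_)
  module

def G (x : E) : E →L[ℝ] ℝ :=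
  (2 * x 0 * (x 1)^2 / (d x)^2) • P 0 + (-(2 * (x 0)^2 * x 1) / (d x)^2) • P 1

lemma hD (x : E) : HasFDerivAt d ((2 * x 0) • P 0 + (2 * x 1) • P 1) x := by
  exact (hsq 0 x).add (hsq 1 x)

lemma hL {x : E} (hx : x ≠ 0) : HasFDerivAt L (G x) x := by
  have hd0 : d x ≠ 0 := (dpos hx).ne'
  have hN : HasFDerivAt (fun x : E => (x 0)^2) ((2 * x 0) • P 0) x := hsq 0 x
  have hd0' : (x 0)^2 + (x 1)^2 ≠ 0 := hd0
  have hInv : HasFDerivAt (fun x : E => (d x)⁻¹)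
      ((-(d x ^ 2)⁻¹) • ((2 * x 0) • P 0 + (2 * x 1) • P 1)) x :=
    (hasDerivAt_inv hd0).comp_hasFDerivAt x (hD x)
  have hmul := hN.mul hInv
  have heq : L = fun x : E => (x 0)^2 * (d x)⁻¹ := by
    funext y; simp [L, d, div_eq_mul_inv]
  rw [heq]
  refine hmul.congr_fderiv (Eq.symm ?_)
  ext y
  simp [G, d, ContinuousLinearMap.add_apply, ContinuousLinearMap.smul_apply, P,
    PiLp.proj_apply, smul_eq_mul]
  field_simp
  ring

end TSNSI

namespace TSNSI

lemma hdsq (x : E) :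
    HasFDerivAt (fun x : E => (d x)^2) ((2 * d x) • ((2 * x 0) • P 0 + (2 * x 1) • P 1)) x := by
  have h : (fun x : E => (d x)^2) = fun x : E => d x * d x := by funext y; ring
  rw [h]
  have := (hD x).mul (hD x)
  refine this.congr_fderiv (Eq.symm ?_)
  module

lemma hinv2 {x : E} (hx : x ≠ 0) :
    HasFDerivAt (fun x : E => ((d x)^2)⁻¹)
      ((-(((d x)^2) ^ 2)⁻¹) • ((2 * d x) • ((2 * x 0) • P 0 + (2 * x 1) • P 1))) x :=
  (hasDerivAt_inv (pow_ne_zero 2 (dpos hx).ne')).comp_hasFDerivAt x (hdsq x)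

lemma single_apply0 (s : ℝ) : (EuclideanSpace.single (0 : Fin 2) s) 0 = s := by
  simp [EuclideanSpace.single_apply]

lemma single_apply1 (s : ℝ) : (EuclideanSpace.single (0 : Fin 2) s) 1 = 0 := by
  simp [EuclideanSpace.single_apply]

lemma single_ne {s : ℝ} (hs : s ≠ 0) : (EuclideanSpace.single (0 : Fin 2) s) ≠ 0 := by
  intro h
  have h2 : (EuclideanSpace.single (0 : Fin 2) s) 0 = (0 : E) 0 := by rw [h]
  rw [single_apply0] at h2
  simp at h2
  exact hs h2

lemma hc0 {s : ℝ} (hs : s ≠ 0) :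
    HasFDerivAt (fun x : E => 2 * x 0 * (x 1)^2 / (d x)^2) (0 : E →L[ℝ] ℝ)
      (EuclideanSpace.single 0 s) := by
  set a : E := EuclideanSpace.single 0 s with ha
  have hne : a ≠ 0 := single_ne hs
  have ha0 : a 0 = s := single_apply0 s
  have ha1 : a 1 = 0 := single_apply1 s
  have h2x0 : HasFDerivAt (fun x : E => 2 * x 0) ((2 : ℝ) • P 0) a := (hP 0 a).const_mul 2
  have hnum := h2x0.mul (hsq 1 a)
  have hmul := hnum.mul (hinv2 hne)
  have heq : (fun x : E => 2 * x 0 * (x 1)^2 / (d x)^2)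
      = fun x : E => (2 * x 0 * (x 1)^2) * ((d x)^2)⁻¹ := by
    funext y; rw [div_eq_mul_inv]
  rw [heq]
  refine hmul.congr_fderiv (Eq.symm ?_)
  ext y
  simp [ha0, ha1, ContinuousLinearMap.add_apply,
    ContinuousLinearMap.smul_apply, smul_eq_mul]

lemma hc1 {s : ℝ} (hs : s ≠ 0) :
    HasFDerivAt (fun x : E => -(2 * (x 0)^2 * x 1) / (d x)^2) ((-2/s^2) • P 1)
      (EuclideanSpace.single 0 s) := by
  set a : E := EuclideanSpace.single 0 s with ha
  have hne : a ≠ 0 := single_ne hs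
  have ha0 : a 0 = s := single_apply0 s
  have ha1 : a 1 = 0 := single_apply1 s
  have hnum := (((hsq 0 a).const_mul 2).mul (hP 1 a)).neg
  have hmul := hnum.mul (hinv2 hne)
  have heq : (fun x : E => -(2 * (x 0)^2 * x 1) / (d x)^2)
      = fun x : E => (-(2 * (x 0)^2 * x 1)) * ((d x)^2)⁻¹ := by
    funext y; rw [div_eq_mul_inv]
  rw [heq]
  refine hmul.congr_fderiv (Eq.symm ?_)
  ext y
  have hda : d a = s^2 := by simp [d, ha0, ha1]
  simp [ha0, ha1, hda, ContinuousLinearMap.add_apply,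
    ContinuousLinearMap.smul_apply, smul_eq_mul, P, PiLp.proj_apply]
  field_simp

end TSNSI

namespace TSNSI

lemma hG {s : ℝ} (hs : s ≠ 0) :
    HasFDerivAt G (((0 : E →L[ℝ] ℝ).smulRight (P 0)) + (((-2/s^2) • P 1).smulRight (P 1)))
      (EuclideanSpace.single 0 s) := by
  have h0 := (hc0 hs).smul_const (P 0)
  have h1 := (hc1 hs).smul_const (P 1)
  exact h0.add h1

set_option synthInstance.maxHeartbeats 200000 in
lemma hess {s : ℝ} (hs : s ≠ 0) :
    (∑ i, fderiv ℝ (fderiv ℝ L) (EuclideanSpace.single 0 s)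
        (EuclideanSpace.single i (1 : ℝ)) (EuclideanSpace.single i (1 : ℝ))) = -2/s^2 := by
  have hne : (EuclideanSpace.single (0 : Fin 2) s) ≠ 0 := single_ne hs
  have hopen : IsOpen {x : E | x ≠ 0} := isOpen_ne
  have hev : fderiv ℝ L =ᶠ[nhds (EuclideanSpace.single (0 : Fin 2) s)] G :=
    Filter.eventually_of_mem (hopen.mem_nhds hne) fun x hx => (hL hx).fderiv
  have h2 : fderiv ℝ (fderiv ℝ L) (EuclideanSpace.single 0 s)
      = ((0 : E →L[ℝ] ℝ).smulRight (P 0)) + (((-2/s^2) • P 1).smulRight (P 1)) := by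
    rw [hev.fderiv_eq, (hG hs).fderiv]
  rw [h2, Fin.sum_univ_two]
  have e00 : (EuclideanSpace.single (0 : Fin 2) (1:ℝ)) 1 = 0 := single_apply1 1
  have e11 : (EuclideanSpace.single (1 : Fin 2) (1:ℝ)) 1 = 1 := by
    simp [EuclideanSpace.single_apply]
  simp [ContinuousLinearMap.add_apply, ContinuousLinearMap.smulRight_apply,
    ContinuousLinearMap.smul_apply, P, PiLp.proj_apply, e00, e11, smul_eq_mul]

lemma contDiffL : ContDiffOn ℝ 2 L {x : E | x ≠ 0} := by
  have hn : ContDiff ℝ 2 (fun x : E => (x 0)^2) := by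
    have : ContDiff ℝ 2 (fun x : E => x 0) := by fun_prop
    exact this.pow 2
  have hd : ContDiff ℝ 2 (fun x : E => (x 0)^2 + (x 1)^2) := by
    have h1 : ContDiff ℝ 2 (fun x : E => x 1) := by fun_prop
    exact hn.add (h1.pow 2)
  exact hn.contDiffOn.div hd.contDiffOn fun x hx => (dpos hx).ne'

lemma scaleInv (c : ℝ) (hc : 0 < c) (x : E) (hx : x ≠ 0) : L (c • x) = L x := by
  have h1 : ((c • x : E) 0)^2 + ((c • x : E) 1)^2 = c^2 * ((x 0)^2 + (x 1)^2) := by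
    simp [PiLp.smul_apply, smul_eq_mul]; ring
  have h0 : ((c • x : E) 0)^2 = c^2 * (x 0)^2 := by
    simp [PiLp.smul_apply, smul_eq_mul]; ring
  simp only [L]
  rw [h1, h0]
  rw [mul_div_mul_left _ _ (pow_ne_zero 2 hc.ne')]

end TSNSI


/-- Trace sharpness is not scale invariant: there exist a dimension `n ≥ 2`, a function
`L` on `EuclideanSpace ℝ (Fin n)` that is twice continuously differentiable on
`{x | x ≠ 0}` and scale invariant (`L (c • x) = L x` for `c > 0`, `x ≠ 0`), together
with a point `θ ≠ 0` and a scalar `c > 0`, `c ≠ 1`, such that the trace of the Hessian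
of `L` (computed in the standard orthonormal basis) differs between `c • θ` and `θ`. -/
theorem trace_sharpness_not_scale_invariant :
    ∃ (n : ℕ), 2 ≤ n ∧ ∃ (L : EuclideanSpace ℝ (Fin n) → ℝ),
      ContDiffOn ℝ 2 L {x : EuclideanSpace ℝ (Fin n) | x ≠ 0} ∧
      (∀ c : ℝ, 0 < c → ∀ x : EuclideanSpace ℝ (Fin n), x ≠ 0 → L (c • x) = L x) ∧
      ∃ (θ : EuclideanSpace ℝ (Fin n)), θ ≠ 0 ∧ ∃ (c : ℝ), 0 < c ∧ c ≠ 1 ∧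
        (∑ i, fderiv ℝ (fderiv ℝ L) (c • θ)
            (EuclideanSpace.single i (1 : ℝ)) (EuclideanSpace.single i (1 : ℝ))) ≠
        (∑ i, fderiv ℝ (fderiv ℝ L) θ
            (EuclideanSpace.single i (1 : ℝ)) (EuclideanSpace.single i (1 : ℝ))) := by
  refine ⟨2, le_refl 2, TSNSI.L, TSNSI.contDiffL, TSNSI.scaleInv,
    EuclideanSpace.single 0 1, TSNSI.single_ne one_ne_zero, 2, by norm_num, by norm_num, ?_⟩
  have hsm : (2 : ℝ) • (EuclideanSpace.single (0 : Fin 2) (1 : ℝ)) =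
      EuclideanSpace.single (0 : Fin 2) (2 : ℝ) := by
    ext j
    simp [PiLp.smul_apply, EuclideanSpace.single_apply, smul_eq_mul, mul_ite]
  rw [hsm, TSNSI.hess (two_ne_zero), TSNSI.hess (one_ne_zero)]
  norm_num
end
end
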